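/- Let Σ be a symmetric positive semidefinite d×d matrix with largest eigenvalue λ₁ = ‖Σ‖ and top unit eigenvector u. For ρ ∈ (0, 1/8], the set of unit vectors v with vᵀΣv ≥ (1 − 4ρ)‖Σ‖ contains a spherical cap around u, and hence has uniform spherical measure at least exp(−c d log(1/ρ)) for some universal constant c > 0. -/

import Mathlib

open MeasureTheory Matrix

/-- Euclidean norm on `Fin d → ℝ`. -/
noncomputable def eucNorm {d : ℕ} (x : Fin d → ℝ) : ℝ := Real.sqrt (∑ i, x i ^ 2)

/-- The uniform (normalized) measure of a subset `A` of the unit sphere in `ℝ^d`, defined as the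
normalized cone measure. -/
noncomputable def sphereMeasure (d : ℕ) (A : Set (Fin d → ℝ)) : ℝ :=
  (volume {x : Fin d → ℝ | x ≠ 0 ∧ eucNorm x ≤ 1 ∧ (eucNorm x)⁻¹ • x ∈ A}).toReal /
    (volume {x : Fin d → ℝ | eucNorm x ≤ 1}).toReal


open Pointwise

section Aux
variable {d : ℕ}

lemma eucNorm_eq_norm (x : Fin d → ℝ) :
    eucNorm x = ‖(WithLp.equiv 2 (Fin d → ℝ)).symm x‖ := by
  rw [EuclideanSpace.norm_eq]
  simp [eucNorm, sq_abs]

lemma eucNorm_nonneg (x : Fin d → ℝ) : 0 ≤ eucNorm x := Real.sqrt_nonneg _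

lemma eucNorm_eq_zero {x : Fin d → ℝ} : eucNorm x = 0 ↔ x = 0 := by
  rw [eucNorm_eq_norm, norm_eq_zero]
  constructor
  · intro h; have := congrArg (WithLp.equiv 2 (Fin d → ℝ)) h; simpa using this
  · rintro rfl; simp

lemma eucNorm_smul (r : ℝ) (x : Fin d → ℝ) : eucNorm (r • x) = |r| * eucNorm x := by
  rw [eucNorm_eq_norm, eucNorm_eq_norm,
    show (WithLp.equiv 2 (Fin d → ℝ)).symm (r • x) = r • (WithLp.equiv 2 (Fin d → ℝ)).symm x by simp,
    norm_smul, Real.norm_eq_abs]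

lemma eucNorm_triangle (x y z : Fin d → ℝ) :
    eucNorm (x - z) ≤ eucNorm (x - y) + eucNorm (y - z) := by
  rw [eucNorm_eq_norm, eucNorm_eq_norm (x-y), eucNorm_eq_norm (y-z)]
  rw [show (WithLp.equiv 2 (Fin d → ℝ)).symm (x - z)
      = (WithLp.equiv 2 (Fin d → ℝ)).symm (x-y) + (WithLp.equiv 2 (Fin d → ℝ)).symm (y-z) by
        simp [sub_add_sub_cancel]]
  exact norm_add_le _ _

lemma abs_eucNorm_sub (x y : Fin d → ℝ) :
    |eucNorm x - eucNorm y| ≤ eucNorm (x - y) := by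
  rw [eucNorm_eq_norm x, eucNorm_eq_norm y, eucNorm_eq_norm (x - y)]
  rw [show (WithLp.equiv 2 (Fin d → ℝ)).symm (x - y)
      = (WithLp.equiv 2 (Fin d → ℝ)).symm x - (WithLp.equiv 2 (Fin d → ℝ)).symm y by simp]
  exact abs_norm_sub_norm_le _ _

variable {Sig : Matrix (Fin d) (Fin d) ℝ}

lemma quad_nonneg (hps : Sig.PosSemidef) (x : Fin d → ℝ) : 0 ≤ x ⬝ᵥ (Sig *ᵥ x) := by
  have := hps.dotProduct_mulVec_nonneg x
  simpa using this

lemma bilin_symm (hs : Sig.IsSymm) (x y : Fin d → ℝ) :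
    x ⬝ᵥ (Sig *ᵥ y) = y ⬝ᵥ (Sig *ᵥ x) := by
  rw [Matrix.dotProduct_mulVec, ← Matrix.mulVec_transpose, hs.eq, dotProduct_comm]

lemma quad_expand (hs : Sig.IsSymm) (x y : Fin d → ℝ) :
    (x + y) ⬝ᵥ (Sig *ᵥ (x + y)) = x ⬝ᵥ (Sig *ᵥ x) + 2 * (x ⬝ᵥ (Sig *ᵥ y)) + y ⬝ᵥ (Sig *ᵥ y) := by
  simp only [Matrix.mulVec_add, add_dotProduct, dotProduct_add, bilin_symm hs y x]
  ring

lemma bilin_sq_le (hs : Sig.IsSymm) (hps : Sig.PosSemidef) (x y : Fin d → ℝ) :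
    (x ⬝ᵥ (Sig *ᵥ y))^2 ≤ (x ⬝ᵥ (Sig *ᵥ x)) * (y ⬝ᵥ (Sig *ᵥ y)) := by
  have h : ∀ t : ℝ, 0 ≤ (y ⬝ᵥ (Sig *ᵥ y)) * (t * t) + (2 * (x ⬝ᵥ (Sig *ᵥ y))) * t
      + x ⬝ᵥ (Sig *ᵥ x) := by
    intro t
    have := quad_nonneg hps (x + t • y)
    rw [quad_expand hs] at this
    have e1 : x ⬝ᵥ (Sig *ᵥ (t • y)) = t * (x ⬝ᵥ (Sig *ᵥ y)) := by
      rw [Matrix.mulVec_smul, dotProduct_smul]; simp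
    have e2 : (t • y) ⬝ᵥ (Sig *ᵥ (t • y)) = t * t * (y ⬝ᵥ (Sig *ᵥ y)) := by
      rw [Matrix.mulVec_smul, dotProduct_smul, smul_dotProduct]
      simp; ring
    rw [e1, e2] at this
    nlinarith [this]
  have := discrim_le_zero h
  rw [discrim] at this
  nlinarith [this]

lemma quad_smul (r : ℝ) (z : Fin d → ℝ) :
    (r • z) ⬝ᵥ (Sig *ᵥ (r • z)) = r^2 * (z ⬝ᵥ (Sig *ᵥ z)) := by
  rw [Matrix.mulVec_smul, dotProduct_smul, smul_dotProduct]
  simp; ring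

lemma quad_le_norm_sq (hps : Sig.PosSemidef) {u : Fin d → ℝ}
    (hmax : ∀ v : Fin d → ℝ, eucNorm v = 1 → v ⬝ᵥ (Sig *ᵥ v) ≤ u ⬝ᵥ (Sig *ᵥ u))
    (z : Fin d → ℝ) :
    z ⬝ᵥ (Sig *ᵥ z) ≤ (u ⬝ᵥ (Sig *ᵥ u)) * (eucNorm z)^2 := by
  rcases eq_or_ne z 0 with rfl | hz
  · simp [eucNorm]
  · have hn : 0 < eucNorm z :=
      lt_of_le_of_ne (eucNorm_nonneg z) (fun h => hz (eucNorm_eq_zero.mp h.symm))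
    have h1 : eucNorm ((eucNorm z)⁻¹ • z) = 1 := by
      rw [eucNorm_smul, abs_of_pos (inv_pos.mpr hn), inv_mul_cancel₀ hn.ne']
    have := hmax _ h1
    rw [quad_smul] at this
    have h2 : (eucNorm z)⁻¹ ^ 2 * (z ⬝ᵥ (Sig *ᵥ z)) ≤ u ⬝ᵥ (Sig *ᵥ u) := this
    have h3 : (0:ℝ) < (eucNorm z)^2 := by positivity
    calc z ⬝ᵥ (Sig *ᵥ z) = ((eucNorm z)⁻¹ ^ 2 * (z ⬝ᵥ (Sig *ᵥ z))) * (eucNorm z)^2 := by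
          field_simp
      _ ≤ (u ⬝ᵥ (Sig *ᵥ u)) * (eucNorm z)^2 := mul_le_mul_of_nonneg_right h2 h3.le

lemma cap_subset (hs : Sig.IsSymm) (hps : Sig.PosSemidef) {u : Fin d → ℝ}
    (hmax : ∀ v : Fin d → ℝ, eucNorm v = 1 → v ⬝ᵥ (Sig *ᵥ v) ≤ u ⬝ᵥ (Sig *ᵥ u))
    {ρ : ℝ} (hρ : 0 < ρ) {v : Fin d → ℝ} (hvu : eucNorm (v - u) ≤ ρ) :
    (1 - 4 * ρ) * (u ⬝ᵥ (Sig *ᵥ u)) ≤ v ⬝ᵥ (Sig *ᵥ v) := by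
  set w := v - u with hw
  set lam := u ⬝ᵥ (Sig *ᵥ u) with hlam
  have hlam0 : 0 ≤ lam := quad_nonneg hps u
  have hqw0 : 0 ≤ w ⬝ᵥ (Sig *ᵥ w) := quad_nonneg hps w
  have hqw : w ⬝ᵥ (Sig *ᵥ w) ≤ lam * ρ^2 := by
    have := quad_le_norm_sq hps hmax w
    have h2 : (eucNorm w)^2 ≤ ρ^2 := by
      apply sq_le_sq' _ hvu; linarith [eucNorm_nonneg w]
    nlinarith [this]
  have hB : (u ⬝ᵥ (Sig *ᵥ w))^2 ≤ (lam * ρ)^2 := by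
    have := bilin_sq_le hs hps u w
    nlinarith [this]
  have hBlow : -(lam * ρ) ≤ u ⬝ᵥ (Sig *ᵥ w) := by
    nlinarith [hB, mul_nonneg hlam0 hρ.le]
  have hexp : v ⬝ᵥ (Sig *ᵥ v) = lam + 2 * (u ⬝ᵥ (Sig *ᵥ w)) + w ⬝ᵥ (Sig *ᵥ w) := by
    have hv' : v = u + w := by rw [hw]; ring
    rw [hv', quad_expand hs]
  rw [hexp]
  nlinarith [hlam0, hqw0, hρ]

def unitB (d : ℕ) : Set (Fin d → ℝ) := {x : Fin d → ℝ | eucNorm x ≤ 1}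

lemma abs_apply_le_eucNorm (x : Fin d → ℝ) (i : Fin d) : |x i| ≤ eucNorm x := by
  rw [← Real.sqrt_sq_eq_abs]
  apply Real.sqrt_le_sqrt
  exact Finset.single_le_sum (f := fun j => x j ^ 2) (fun j _ => sq_nonneg _) (Finset.mem_univ i)

lemma unitB_subset_box : unitB d ⊆ Set.pi Set.univ (fun _ : Fin d => Set.Icc (-1 : ℝ) 1) := by
  intro x hx i _
  exact abs_le.mp ((abs_apply_le_eucNorm x i).trans hx)

lemma box_subset_unitB (hd : 0 < d) :
    Set.pi Set.univ (fun _ : Fin d => Set.Icc (0 : ℝ) (1 / d)) ⊆ unitB d := by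
  intro x hx
  have hsum : ∑ i, x i ^ 2 ≤ 1 := by
    calc ∑ i, x i ^ 2 ≤ ∑ _i : Fin d, (1/d : ℝ)^2 := by
          apply Finset.sum_le_sum
          intro i _
          have := hx i (Set.mem_univ i)
          nlinarith [this.1, this.2]
      _ = d * (1/d : ℝ)^2 := by simp [Finset.sum_const, nsmul_eq_mul]
      _ = 1 / (d:ℝ) := by
          have hd0 : (d:ℝ) ≠ 0 := by positivity
          field_simp
      _ ≤ 1 := by
          have hd' : (1:ℝ) ≤ d := by exact_mod_cast hd
          rw [div_le_one (by linarith)]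
          exact hd'
  show Real.sqrt _ ≤ 1
  rw [show (1:ℝ) = Real.sqrt 1 by simp]
  exact Real.sqrt_le_sqrt hsum

lemma volume_unitB_lt_top : volume (unitB d) < ⊤ := by
  apply lt_of_le_of_lt (measure_mono unitB_subset_box)
  rw [MeasureTheory.volume_pi_pi]
  simp [Real.volume_Icc]

lemma volume_unitB_pos (hd : 0 < d) : 0 < volume (unitB d) := by
  apply lt_of_lt_of_le _ (measure_mono (box_subset_unitB hd))
  rw [MeasureTheory.volume_pi_pi]
  simp [Real.volume_Icc]
  apply ENNReal.pow_pos
  rw [ENNReal.ofReal_pos]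
  positivity

lemma smul_unitB {r : ℝ} (hr : 0 < r) : r • unitB d = {y : Fin d → ℝ | eucNorm y ≤ r} := by
  ext y
  rw [Set.mem_smul_set_iff_inv_smul_mem₀ hr.ne']
  show eucNorm (r⁻¹ • y) ≤ 1 ↔ _
  rw [eucNorm_smul, abs_of_pos (inv_pos.mpr hr)]
  rw [Set.mem_setOf_eq, inv_mul_le_iff₀ hr, mul_one]

lemma ball_eq_vadd_smul (c : Fin d → ℝ) {r : ℝ} (hr : 0 < r) :
    {x : Fin d → ℝ | eucNorm (x - c) ≤ r} = c +ᵥ (r • unitB d) := by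
  ext x
  rw [Set.mem_vadd_set_iff_neg_vadd_mem, smul_unitB hr]
  simp only [Set.mem_setOf_eq, vadd_eq_add, neg_add_eq_sub]

lemma volume_eucBall (c : Fin d → ℝ) {r : ℝ} (hr : 0 < r) :
    volume {x : Fin d → ℝ | eucNorm (x - c) ≤ r}
      = ENNReal.ofReal r ^ d * volume (unitB d) := by
  rw [ball_eq_vadd_smul c hr, measure_vadd, Measure.addHaar_smul,
    abs_of_pos (pow_pos hr _), ENNReal.ofReal_pow hr.le]
  congr 2
  rw [Module.finrank_fintype_fun_eq_card, Fintype.card_fin]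

lemma exp_le_pow (d : ℕ) {ρ : ℝ} (hρ : 0 < ρ) (hρ8 : ρ ≤ 1/8) :
    Real.exp (-(2 * d * Real.log (1/ρ))) ≤ (ρ/4)^d := by
  have h4 : (0:ℝ) < ρ/4 := by linarith
  rw [show ((ρ/4:ℝ))^d = Real.exp ((d:ℝ) * Real.log (ρ/4)) by
    rw [Real.exp_nat_mul, Real.exp_log h4]]
  apply Real.exp_le_exp.mpr
  have hlogρ4 : Real.log (ρ/4) = Real.log ρ - Real.log 4 := Real.log_div hρ.ne' (by norm_num)
  have hlog1ρ : Real.log (1/ρ) = - Real.log ρ := by rw [one_div, Real.log_inv]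
  have h1 : Real.log ρ + Real.log 4 ≤ 0 := by
    rw [← Real.log_mul hρ.ne' (by norm_num)]
    apply Real.log_nonpos (by positivity) (by linarith)
  have hd0 : (0:ℝ) ≤ d := Nat.cast_nonneg d
  rw [hlogρ4, hlog1ρ]
  nlinarith [mul_nonneg hd0 (neg_nonneg.mpr h1)]

end Aux

/-- There is a universal constant `c > 0` such that for any symmetric PSD matrix `Σ` with top
unit eigenvector `u` (i.e. `u` maximizes the quadratic form over the sphere, with value
`λ₁ = uᵀΣu = ‖Σ‖`) and any `ρ ∈ (0, 1/8]`, the set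
`E := {v : ‖v‖ = 1, vᵀΣv ≥ (1 − 4ρ)λ₁}` contains a spherical cap around `u`, and has uniform
spherical measure at least `exp(−c d log(1/ρ))`. -/
theorem near_top_eigenvector_set_measure :
    ∃ c : ℝ, 0 < c ∧
      ∀ (d : ℕ) (Sig : Matrix (Fin d) (Fin d) ℝ), Sig.IsSymm → Sig.PosSemidef →
        ∀ u : Fin d → ℝ, eucNorm u = 1 →
          (∀ v : Fin d → ℝ, eucNorm v = 1 → v ⬝ᵥ (Sig *ᵥ v) ≤ u ⬝ᵥ (Sig *ᵥ u)) →
          ∀ ρ : ℝ, 0 < ρ → ρ ≤ 1/8 →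
            (∃ r : ℝ, 0 < r ∧
              {v : Fin d → ℝ | eucNorm v = 1 ∧ eucNorm (v - u) ≤ r} ⊆
                {v : Fin d → ℝ | eucNorm v = 1 ∧
                  (1 - 4 * ρ) * (u ⬝ᵥ (Sig *ᵥ u)) ≤ v ⬝ᵥ (Sig *ᵥ v)}) ∧
            Real.exp (-(c * d * Real.log (1/ρ))) ≤
              sphereMeasure d {v : Fin d → ℝ | eucNorm v = 1 ∧
                (1 - 4 * ρ) * (u ⬝ᵥ (Sig *ᵥ u)) ≤ v ⬝ᵥ (Sig *ᵥ v)} := by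
  refine ⟨2, by norm_num, ?_⟩
  intro d Sig hs hps u hu hmax ρ hρ hρ8
  set E : Set (Fin d → ℝ) := {v : Fin d → ℝ | eucNorm v = 1 ∧
      (1 - 4 * ρ) * (u ⬝ᵥ (Sig *ᵥ u)) ≤ v ⬝ᵥ (Sig *ᵥ v)} with hE
  have hd : 0 < d := by
    rcases Nat.eq_zero_or_pos d with h0 | h
    · subst h0; simp [eucNorm] at hu
    · exact h
  have hcapE : ∀ v : Fin d → ℝ, eucNorm v = 1 → eucNorm (v - u) ≤ ρ → v ∈ E := by
    intro v hv1 hv2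
    exact ⟨hv1, cap_subset hs hps hmax hρ hv2⟩
  constructor
  · exact ⟨ρ, hρ, fun v hv => hcapE v hv.1 hv.2⟩
  -- the ball around u/2 of radius ρ/4 is inside the cone over E
  set C : Set (Fin d → ℝ) :=
    {x : Fin d → ℝ | x ≠ 0 ∧ eucNorm x ≤ 1 ∧ (eucNorm x)⁻¹ • x ∈ E} with hC
  have hball : {x : Fin d → ℝ | eucNorm (x - (1/2 : ℝ) • u) ≤ ρ/4} ⊆ C := by
    intro x hx
    simp only [Set.mem_setOf_eq] at hx
    have hcu : eucNorm ((1/2 : ℝ) • u) = 1/2 := by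
      rw [eucNorm_smul, hu]; norm_num
    have habs : |eucNorm x - 1/2| ≤ ρ/4 := by
      have := abs_eucNorm_sub x ((1/2 : ℝ) • u)
      rw [hcu] at this
      exact this.trans hx
    have h1 := abs_le.mp habs
    set n := eucNorm x with hn
    have hnpos : 0 < n := by linarith [h1.1]
    have hxne : x ≠ 0 := fun h => by
      rw [h] at hn
      have : n = 0 := by rw [hn]; exact eucNorm_eq_zero.mpr rfl
      linarith
    have hxle : eucNorm x ≤ 1 := by rw [← hn]; linarith [h1.2]
    refine ⟨hxne, hxle, ?_⟩
    apply hcapE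
    · rw [eucNorm_smul, abs_of_pos (inv_pos.mpr hnpos), ← hn, inv_mul_cancel₀ hnpos.ne']
    · have htri := eucNorm_triangle (n⁻¹ • x) ((2:ℝ) • x) u
      have e1 : eucNorm (n⁻¹ • x - (2:ℝ) • x) ≤ ρ/2 := by
        rw [show n⁻¹ • x - (2:ℝ) • x = (n⁻¹ - 2) • x by rw [sub_smul]]
        rw [eucNorm_smul, ← hn]
        have key : (n⁻¹ - 2) * n = 1 - 2*n := by field_simp
        have : |n⁻¹ - 2| * n = |1 - 2*n| := by
          rw [← key, abs_mul, abs_of_pos hnpos]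
        rw [this]
        have : |1 - 2*n| ≤ ρ/2 := by
          rw [abs_le]; constructor <;> [linarith [h1.2]; linarith [h1.1]]
        linarith
      have e2 : eucNorm ((2:ℝ) • x - u) ≤ ρ/2 := by
        rw [show (2:ℝ) • x - u = (2:ℝ) • (x - (1/2 : ℝ) • u) by
          rw [smul_sub, smul_smul]; norm_num]
        rw [eucNorm_smul]
        rw [abs_of_pos (by norm_num : (0:ℝ) < 2)]
        linarith
      calc eucNorm (n⁻¹ • x - u) ≤ _ + _ := htri
        _ ≤ ρ := by linarith
  -- volume estimates
  have hρ4 : (0:ℝ) < ρ/4 := by linarith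
  have hCle : volume C ≤ volume (unitB d) := measure_mono (fun x hx => hx.2.1)
  have hCfin : volume C ≠ ⊤ := (lt_of_le_of_lt hCle volume_unitB_lt_top).ne
  have hUfin : volume (unitB d) ≠ ⊤ := volume_unitB_lt_top.ne
  have hUpos : (0:ℝ) < (volume (unitB d)).toReal :=
    ENNReal.toReal_pos (volume_unitB_pos hd).ne' hUfin
  have hlow : ENNReal.ofReal (ρ/4) ^ d * volume (unitB d) ≤ volume C := by
    rw [← volume_eucBall ((1/2 : ℝ) • u) hρ4]
    exact measure_mono hball
  have hlowR : (ρ/4)^d * (volume (unitB d)).toReal ≤ (volume C).toReal := by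
    have := ENNReal.toReal_mono hCfin hlow
    rwa [ENNReal.toReal_mul, ENNReal.toReal_pow, ENNReal.toReal_ofReal hρ4.le] at this
  have hfrac : (ρ/4)^d ≤ sphereMeasure d E := by
    have : sphereMeasure d E = (volume C).toReal / (volume (unitB d)).toReal := rfl
    rw [this, le_div_iff₀ hUpos]
    exact hlowR
  exact le_trans (exp_le_pow d hρ hρ8) hfrac
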